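/- (Generalized von Neumann inequality, cyclic group form) Let p be a prime, k ≥ 2, and let b_2, ..., b_k be distinct nonzero elements of ℤ/pℤ, all distinct from each other. For any functions f_1, f_2, ..., f_k : ℤ/pℤ → ℂ bounded in magnitude by 1, |E_{m, j ∈ ℤ/pℤ} f_1(j) · f_2(j + m·b_2) ⋯ f_k(j + m·b_k)| ≤ ‖f_1‖_{U^{k-1}(ℤ/pℤ)}. -/

import Mathlib

/-- The Gowers `U^d` average `E_{x,h₁,...,h_d ∈ ℤ/pℤ} ∏_{ω ∈ {0,1}^d} C^{|ω|} f(x + ω·h)`. -/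
noncomputable def gowersUavg (p d : ℕ) [NeZero p] (f : ZMod p → ℂ) : ℂ :=
  (1 / (p : ℂ) ^ (d + 1)) * ∑ x : ZMod p, ∑ h : Fin d → ZMod p,
    ∏ ω : Fin d → Bool,
      (if Even ((Finset.univ.filter fun i => ω i = true).card)
        then f (x + ∑ i, if ω i then h i else 0)
        else (starRingEnd ℂ) (f (x + ∑ i, if ω i then h i else 0)))

/-- The Gowers uniformity norm `‖f‖_{U^d(ℤ/pℤ)}`. -/
noncomputable def gowersNorm (p d : ℕ) [NeZero p] (f : ZMod p → ℂ) : ℝ :=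
  (gowersUavg p d f).re ^ ((1 : ℝ) / 2 ^ d)

open Finset Complex

noncomputable def CC (n : ℕ) : ℂ → ℂ := if Even n then id else (starRingEnd ℂ)

lemma CC_mul (n : ℕ) (a b : ℂ) : CC n (a * b) = CC n a * CC n b := by
  unfold CC; split <;> simp

lemma CC_succ (n : ℕ) (z : ℂ) : CC (n + 1) z = CC n ((starRingEnd ℂ) z) := by
  unfold CC
  rcases Nat.even_or_odd n with h | h
  · simp [h, Nat.even_add_one, Nat.not_even_iff_odd, h.add_one]
  · simp [Nat.even_add_one, Nat.not_even_iff_odd.2 h, h]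

lemma abs_CC (n : ℕ) (z : ℂ) : ‖CC n z‖ = ‖z‖ := by
  unfold CC; split <;> simp

lemma ite_eq_CC (n : ℕ) (z : ℂ) :
    (if Even n then z else (starRingEnd ℂ) z) = CC n z := by
  unfold CC; split <;> rfl

lemma gowersUavg_eq (p d : ℕ) [NeZero p] (f : ZMod p → ℂ) :
    gowersUavg p d f = (1 / (p : ℂ) ^ (d + 1)) * ∑ x : ZMod p, ∑ h : Fin d → ZMod p,
      ∏ ω : Fin d → Bool,
        CC ((Finset.univ.filter fun i => ω i = true).card)
          (f (x + ∑ i, if ω i then h i else 0)) := by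
  simp only [gowersUavg, ite_eq_CC]

/-- multiplicative derivative -/
noncomputable def mder {p : ℕ} (s : ZMod p) (g : ZMod p → ℂ) : ZMod p → ℂ :=
  fun x => g x * (starRingEnd ℂ) (g (x + s))

lemma card_filter_cons (d : ℕ) (b : Bool) (ω' : Fin d → Bool) :
    (Finset.univ.filter fun i => (Fin.cons b ω' : Fin (d+1) → Bool) i = true).card
      = (if b then 1 else 0) + (Finset.univ.filter fun i => ω' i = true).card := by
  simp only [Finset.card_filter]
  rw [Fin.sum_univ_succ]
  simp [Fin.cons_zero, Fin.cons_succ]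

lemma sum_ite_cons (p d : ℕ) [NeZero p] (b : Bool) (ω' : Fin d → Bool)
    (s : ZMod p) (h' : Fin d → ZMod p) :
    (∑ i, if (Fin.cons b ω' : Fin (d+1) → Bool) i then (Fin.cons s h' : Fin (d+1) → ZMod p) i else 0)
      = (if b then s else 0) + ∑ i, if ω' i then h' i else 0 := by
  rw [Fin.sum_univ_succ]
  simp [Fin.cons_zero, Fin.cons_succ]
lemma sum_cons_equiv {M : Type*} [AddCommMonoid M] {β : Type*} [Fintype β] (d : ℕ)
    (Q : (Fin (d + 1) → β) → M) :
    (∑ h : Fin (d + 1) → β, Q h) = ∑ s : β, ∑ h' : Fin d → β, Q (Fin.cons s h') := by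
  exact ((Fintype.sum_equiv (Fin.consEquiv fun _ => β) (fun sh => Q (Fin.cons sh.1 sh.2)) Q
    (fun sh => rfl)).symm).trans (Fintype.sum_prod_type _)

lemma prod_cons_equiv {M : Type*} [CommMonoid M] {β : Type*} [Fintype β] (d : ℕ)
    (Q : (Fin (d + 1) → β) → M) :
    (∏ h : Fin (d + 1) → β, Q h) = ∏ s : β, ∏ h' : Fin d → β, Q (Fin.cons s h') := by
  exact ((Fintype.prod_equiv (Fin.consEquiv fun _ => β) (fun sh => Q (Fin.cons sh.1 sh.2)) Q
    (fun sh => rfl)).symm).trans (Fintype.prod_prod_type _)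

lemma Uavg_succ (p d : ℕ) [NeZero p] (g : ZMod p → ℂ) :
    gowersUavg p (d + 1) g = (1 / (p : ℂ)) * ∑ s : ZMod p, gowersUavg p d (mder s g) := by
  rw [gowersUavg_eq]
  simp only [gowersUavg_eq, ← Finset.mul_sum, ← mul_assoc]
  have hpow : (1 / (p : ℂ)) * (1 / (p : ℂ) ^ (d + 1)) = 1 / (p : ℂ) ^ (d + 1 + 1) := by
    rw [div_mul_div_comm]; ring_nf
  rw [hpow]
  congr 1
  conv_rhs => rw [Finset.sum_comm]
  refine Finset.sum_congr rfl fun x _ => ?_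
  rw [sum_cons_equiv]
  refine Finset.sum_congr rfl fun s _ => Finset.sum_congr rfl fun h' _ => ?_
  rw [show (∏ ω : Fin (d+1) → Bool,
      CC ((Finset.univ.filter fun i => ω i = true).card)
        (g (x + ∑ i, if ω i then Fin.cons s h' i else 0)))
    = ∏ b : Bool, ∏ ω' : Fin d → Bool,
      CC ((Finset.univ.filter fun i => (Fin.cons b ω' : Fin (d+1) → Bool) i = true).card)
        (g (x + ∑ i, if (Fin.cons b ω' : Fin (d+1) → Bool) i then Fin.cons s h' i else 0))
    from prod_cons_equiv d _]
  rw [Fintype.prod_bool, ← Finset.prod_mul_distrib]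
  refine Finset.prod_congr rfl fun ω' _ => ?_
  simp only [card_filter_cons, sum_ite_cons, Bool.false_eq_true,
    if_true, if_false, ite_true, ite_false, zero_add, add_zero, mder]
  rw [add_comm 1, CC_succ, CC_mul]
  rw [show x + (s + (∑ i : Fin d, if ω' i = true then h' i else 0))
      = x + (∑ i : Fin d, if ω' i = true then h' i else 0) + s by ring]
  exact mul_comm _ _

lemma sum_shift {p : ℕ} [NeZero p] {M : Type*} [AddCommMonoid M] (a : ZMod p) (f : ZMod p → M) :
    ∑ x : ZMod p, f (a + x) = ∑ x : ZMod p, f x :=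
  Fintype.sum_equiv (Equiv.addLeft a) _ _ fun _ => rfl

lemma sum_shift' {p : ℕ} [NeZero p] {M : Type*} [AddCommMonoid M] (a : ZMod p) (f : ZMod p → M) :
    ∑ x : ZMod p, f (x + a) = ∑ x : ZMod p, f x :=
  Fintype.sum_equiv (Equiv.addRight a) _ _ fun _ => rfl

lemma sum_mul_reindex {p : ℕ} [Fact p.Prime] {M : Type*} [AddCommMonoid M] (e : ZMod p)
    (he : e ≠ 0) (f : ZMod p → M) :
    ∑ x : ZMod p, f (x * e) = ∑ x : ZMod p, f x :=
  Fintype.sum_equiv (Equiv.mulRight₀ e he) _ _ fun _ => rfl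

lemma Uavg_zero (p : ℕ) [NeZero p] (g : ZMod p → ℂ) :
    gowersUavg p 0 g = (1 / (p : ℂ)) * ∑ x : ZMod p, g x := by
  rw [gowersUavg_eq]
  simp [CC, Fintype.sum_unique, Fintype.prod_unique]

lemma Uavg_one (p : ℕ) [NeZero p] (g : ZMod p → ℂ) :
    gowersUavg p 1 g =
      ((((1 / (p : ℝ)) ^ 2) * Complex.normSq (∑ x : ZMod p, g x) : ℝ) : ℂ) := by
  rw [show (1 : ℕ) = 0 + 1 from rfl, Uavg_succ]
  simp only [Uavg_zero, ← Finset.mul_sum, ← mul_assoc]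
  rw [Finset.sum_comm]
  have : ∀ x : ZMod p, ∑ s : ZMod p, mder s g x
      = g x * (starRingEnd ℂ) (∑ y : ZMod p, g y) := by
    intro x
    rw [map_sum, ← sum_shift x (fun y => (starRingEnd ℂ) (g y)), Finset.mul_sum]
    rfl
  rw [Finset.sum_congr rfl fun x _ => this x, ← Finset.sum_mul, Complex.mul_conj]
  push_cast
  ring

lemma Uavg_exists_nonneg (p : ℕ) [NeZero p] (d : ℕ) (hd : 1 ≤ d) (g : ZMod p → ℂ) :
    ∃ r : ℝ, 0 ≤ r ∧ gowersUavg p d g = (r : ℂ) := by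
  induction d, hd using Nat.le_induction generalizing g with
  | base =>
      exact ⟨(1 / (p : ℝ)) ^ 2 * Complex.normSq (∑ x : ZMod p, g x),
        mul_nonneg (by positivity) (Complex.normSq_nonneg _), Uavg_one p g⟩
  | succ d hd ih =>
      choose r hr hval using fun s => ih (mder s g)
      refine ⟨(1 / (p : ℝ)) * ∑ s : ZMod p, r s, mul_nonneg (by positivity) (Finset.sum_nonneg fun s _ => hr s), ?_⟩
      rw [Uavg_succ]
      simp only [hval]
      push_cast
      rw [Finset.mul_sum]

noncomputable def lam (p : ℕ) [NeZero p] (n : ℕ) (c : Fin n → ZMod p)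
    (F : Fin n → ZMod p → ℂ) : ℂ :=
  (1 / (p : ℂ) ^ 2) * ∑ m : ZMod p, ∑ j : ZMod p, ∏ i, F i (j + m * c i)

lemma key_base (p : ℕ) [Fact p.Prime] (c : Fin 2 → ZMod p) (hc : Function.Injective c)
    (F : Fin 2 → ZMod p → ℂ) (hF : ∀ i x, ‖F i x‖ ≤ 1) :
    ‖lam p 2 c F‖ ^ 2 ≤ (gowersUavg p 1 (F 0)).re := by
  have hP : (0 : ℝ) < (p : ℝ) := by
    exact_mod_cast (Fact.out : p.Prime).pos
  have he : c 1 - c 0 ≠ 0 := sub_ne_zero.2 fun h => absurd (hc h) (by decide)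
  have I : lam p 2 c F = (1 / (p : ℂ) ^ 2) * ((∑ x : ZMod p, F 0 x) * (∑ x : ZMod p, F 1 x)) := by
    unfold lam
    congr 1
    calc ∑ m : ZMod p, ∑ j : ZMod p, ∏ i : Fin 2, F i (j + m * c i)
        = ∑ m : ZMod p, ∑ x : ZMod p, F 0 x * F 1 (x + m * (c 1 - c 0)) := by
          refine Finset.sum_congr rfl fun m _ => ?_
          rw [← sum_shift' (m * c 0) (fun x => F 0 x * F 1 (x + m * (c 1 - c 0)))]
          refine Finset.sum_congr rfl fun j _ => ?_
          rw [Fin.prod_univ_two]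
          congr 2
          ring
      _ = ∑ x : ZMod p, F 0 x * ∑ m : ZMod p, F 1 (x + m * (c 1 - c 0)) := by
          rw [Finset.sum_comm]
          simp [Finset.mul_sum]
      _ = (∑ x : ZMod p, F 0 x) * (∑ x : ZMod p, F 1 x) := by
          rw [Finset.sum_mul]
          refine Finset.sum_congr rfl fun x _ => ?_
          congr 1
          rw [sum_mul_reindex (c 1 - c 0) he (fun u => F 1 (x + u)), sum_shift x]
  have hS1 : ‖∑ x : ZMod p, F 1 x‖ ≤ (p : ℝ) := by
    refine le_trans (norm_sum_le _ _) ?_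
    calc ∑ x : ZMod p, ‖F 1 x‖ ≤ ∑ _x : ZMod p, (1 : ℝ) :=
          Finset.sum_le_sum fun x _ => hF 1 x
      _ = (p : ℝ) := by simp [ZMod.card]
  rw [I, Uavg_one, Complex.ofReal_re, ← Complex.sq_norm]
  rw [norm_mul, norm_mul]
  have habs : ‖1 / (p : ℂ) ^ 2‖ = 1 / (p : ℝ) ^ 2 := by
    rw [norm_div, norm_pow]
    simp
  rw [habs]
  set a := ‖∑ x : ZMod p, F 0 x‖ with ha
  set b := ‖∑ x : ZMod p, F 1 x‖ with hb
  have ha0 : 0 ≤ a := norm_nonneg _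
  have hb0 : 0 ≤ b := norm_nonneg _
  have hb2 : b ^ 2 ≤ (p : ℝ) ^ 2 := pow_le_pow_left₀ hb0 hS1 2
  calc (1 / (p:ℝ) ^ 2 * (a * b)) ^ 2 = (a ^ 2 * b ^ 2) / (p:ℝ) ^ 4 := by
        field_simp
    _ ≤ (a ^ 2 * (p:ℝ) ^ 2) / (p:ℝ) ^ 4 := by gcongr
    _ = (1 / (p:ℝ)) ^ 2 * a ^ 2 := by
        field_simp

lemma abs_inv_p_sq (p : ℕ) [NeZero p] :
    ‖1 / (p : ℂ) ^ 2‖ = 1 / (p : ℝ) ^ 2 := by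
  rw [norm_div, norm_pow]
  simp

lemma sum_comm3 {M : Type*} [AddCommMonoid M] {α β γ : Type*} [Fintype α] [Fintype β]
    [Fintype γ] (f : α → β → γ → M) :
    ∑ a : α, ∑ b : β, ∑ c : γ, f a b c = ∑ c : γ, ∑ b : β, ∑ a : α, f a b c := by
  refine (Finset.sum_congr rfl fun a _ => Finset.sum_comm).trans ?_
  refine Finset.sum_comm.trans ?_
  exact Finset.sum_congr rfl fun c _ => Finset.sum_comm

lemma key (p : ℕ) [Fact p.Prime] : ∀ (n : ℕ) (c : Fin (n + 2) → ZMod p),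
    Function.Injective c → ∀ F : Fin (n + 2) → ZMod p → ℂ,
    (∀ i x, ‖F i x‖ ≤ 1) →
    ‖lam p (n + 2) c F‖ ^ (2 ^ (n + 1)) ≤ (gowersUavg p (n + 1) (F 0)).re := by
  intro n
  induction n with
  | zero =>
      intro c hc F hF
      simpa using key_base p c hc F hF
  | succ n ih =>
      intro c hc F hF
      have hP : (0 : ℝ) < (p : ℝ) := by exact_mod_cast (Fact.out : p.Prime).pos
      set L : Fin (n + 3) := Fin.last (n + 2) with hL
      set d' : Fin (n + 2) → ZMod p := fun i => c i.castSucc - c L with hd'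
      have hd'inj : Function.Injective d' := by
        intro i j hij
        have : c i.castSucc = c j.castSucc := by
          have := sub_left_injective (by exact hij)
          exact this
        exact Fin.castSucc_injective _ (hc this)
      have he : d' 0 ≠ 0 := by
        intro h
        have h2 : c (Fin.castSucc 0) = c L := by
          have := sub_eq_zero.1 h
          exact this
        have h3 := hc h2
        have h4 := congrArg Fin.val h3
        simp [hL] at h4
      set A : ZMod p → ℂ := fun y =>
        ∑ m : ZMod p, ∏ i : Fin (n + 2), F i.castSucc (y + m * d' i) with hA
      set Ft : ZMod p → Fin (n + 2) → ZMod p → ℂ := fun t i x =>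
        F i.castSucc x * (starRingEnd ℂ) (F i.castSucc (x + t * d' i)) with hFt
      have hFtb : ∀ t i x, ‖Ft t i x‖ ≤ 1 := by
        intro t i x
        rw [hFt]
        simp only [norm_mul]
        rw [Complex.norm_conj]
        exact mul_le_one₀ (hF _ _) (norm_nonneg _) (hF _ _)
      -- Identity 1
      have I1 : (∑ m : ZMod p, ∑ j : ZMod p, ∏ i, F i (j + m * c i))
          = ∑ y : ZMod p, F L y * A y := by
        calc (∑ m : ZMod p, ∑ j : ZMod p, ∏ i, F i (j + m * c i))
            = ∑ m : ZMod p, ∑ y : ZMod p,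
              (∏ i : Fin (n + 2), F i.castSucc (y + m * d' i)) * F L y := by
              refine Finset.sum_congr rfl fun m _ => ?_
              rw [← sum_shift' (m * c L) (fun y =>
                (∏ i : Fin (n + 2), F i.castSucc (y + m * d' i)) * F L y)]
              refine Finset.sum_congr rfl fun j _ => ?_
              rw [Fin.prod_univ_castSucc]
              congr 1
              refine Finset.prod_congr rfl fun i _ => ?_
              congr 1
              rw [hd']
              ring
          _ = ∑ y : ZMod p, F L y * A y := by
              rw [Finset.sum_comm]
              refine Finset.sum_congr rfl fun y _ => ?_
              rw [← Finset.sum_mul, mul_comm]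
      -- Step 1 : triangle inequality
      have S1 : ‖lam p (n + 3) c F‖
          ≤ (1 / (p:ℝ) ^ 2) * ∑ y : ZMod p, ‖A y‖ := by
        rw [lam, I1, norm_mul, abs_inv_p_sq]
        gcongr
        refine le_trans (norm_sum_le _ _) (Finset.sum_le_sum fun y _ => ?_)
        rw [norm_mul]
        exact mul_le_of_le_one_left (norm_nonneg _) (hF L y)
      -- Identity 2
      have I2 : (∑ y : ZMod p, A y * (starRingEnd ℂ) (A y))
          = ∑ t : ZMod p, ∑ m : ZMod p, ∑ y : ZMod p, ∏ i, Ft t i (y + m * d' i) := by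
        have hy : ∀ y : ZMod p, A y * (starRingEnd ℂ) (A y)
            = ∑ m : ZMod p, ∑ t : ZMod p, ∏ i, Ft t i (y + m * d' i) := by
          intro y
          rw [hA, map_sum, Finset.sum_mul_sum]
          refine Finset.sum_congr rfl fun m _ => ?_
          rw [← sum_shift m (fun m' => (∏ i : Fin (n+2), F i.castSucc (y + m * d' i)) *
            (starRingEnd ℂ) (∏ i : Fin (n+2), F i.castSucc (y + m' * d' i)))]
          refine Finset.sum_congr rfl fun t _ => ?_
          rw [map_prod, ← Finset.prod_mul_distrib]
          refine Finset.prod_congr rfl fun i _ => ?_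
          rw [hFt]
          congr 2
          ring
        rw [Finset.sum_congr rfl fun y _ => hy y]
        exact sum_comm3 _
      -- bookkeeping
      have hp0 : ((p:ℂ)) ≠ 0 := by
        exact_mod_cast (Fact.out : p.Prime).pos.ne'
      have hP0 : ((p:ℝ)) ≠ 0 := ne_of_gt hP
      have cardZ : (Finset.univ : Finset (ZMod p)).card = p := by
        rw [Finset.card_univ, ZMod.card]
      have hlamt : ∀ t : ZMod p, (∑ m : ZMod p, ∑ y : ZMod p, ∏ i, Ft t i (y + m * d' i))
          = (p:ℂ)^2 * lam p (n+2) d' (Ft t) := by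
        intro t
        rw [lam, ← mul_assoc]
        rw [show ((p:ℂ)^2 * (1/(p:ℂ)^2)) = 1 by field_simp, one_mul]
      have S2 : ‖lam p (n + 3) c F‖ ^ 2
          ≤ (1/(p:ℝ)) * ∑ t : ZMod p, ‖lam p (n+2) d' (Ft t)‖ := by
        have h2 : (∑ y : ZMod p, ‖A y‖)^2
            ≤ (p:ℝ) * ∑ y : ZMod p, ‖A y‖^2 := by
          have h := sq_sum_le_card_mul_sum_sq (s := Finset.univ)
            (f := fun y : ZMod p => ‖A y‖)
          rw [cardZ] at h
          exact_mod_cast h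
        have h3 : ∑ y : ZMod p, ‖A y‖^2
            ≤ ∑ t : ZMod p, (p:ℝ)^2 * ‖lam p (n+2) d' (Ft t)‖ := by
          have e1 : ∑ y : ZMod p, ‖A y‖^2
              = (∑ y : ZMod p, A y * (starRingEnd ℂ) (A y)).re := by
            rw [Complex.re_sum]
            refine Finset.sum_congr rfl fun y _ => ?_
            rw [Complex.sq_norm, Complex.mul_conj, Complex.ofReal_re]
          rw [e1, I2, Complex.re_sum]
          refine Finset.sum_le_sum fun t _ => ?_
          refine le_trans (Complex.re_le_norm _) ?_
          rw [hlamt t, norm_mul, norm_pow]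
          simp
        calc ‖lam p (n + 3) c F‖ ^ 2
            ≤ ((1/(p:ℝ)^2) * ∑ y : ZMod p, ‖A y‖)^2 :=
              pow_le_pow_left₀ (norm_nonneg _) S1 2
          _ = (1/(p:ℝ)^4) * (∑ y : ZMod p, ‖A y‖)^2 := by
              rw [mul_pow, div_pow, one_pow, ← pow_mul]
          _ ≤ (1/(p:ℝ)^4) * ((p:ℝ) * ∑ y : ZMod p, ‖A y‖^2) :=
              mul_le_mul_of_nonneg_left h2 (by positivity)
          _ ≤ (1/(p:ℝ)^4) * ((p:ℝ) *
                ∑ t : ZMod p, (p:ℝ)^2 * ‖lam p (n+2) d' (Ft t)‖) :=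
              mul_le_mul_of_nonneg_left (mul_le_mul_of_nonneg_left h3 hP.le) (by positivity)
          _ = (1/(p:ℝ)) * ∑ t : ZMod p, ‖lam p (n+2) d' (Ft t)‖ := by
              rw [← Finset.mul_sum, ← mul_assoc, ← mul_assoc]
              congr 1
              field_simp
      obtain ⟨K, hK⟩ : ∃ K, 2^(n+1) = K + 1 :=
        ⟨2^(n+1) - 1, by have := Nat.one_le_two_pow (n := n+1); omega⟩
      have hpm : ((1/(p:ℝ)) * ∑ t : ZMod p, ‖lam p (n+2) d' (Ft t)‖) ^ (2^(n+1))
          ≤ (1/(p:ℝ)) * ∑ t : ZMod p, ‖lam p (n+2) d' (Ft t)‖ ^ (2^(n+1)) := by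
        rw [hK]
        have h := pow_sum_div_card_le_sum_pow (s := Finset.univ)
          (f := fun t : ZMod p => ‖lam p (n+2) d' (Ft t)‖)
          (fun t _ => norm_nonneg _) K
        rw [cardZ] at h
        calc ((1/(p:ℝ)) * ∑ t : ZMod p, ‖lam p (n+2) d' (Ft t)‖) ^ (K+1)
            = (1/(p:ℝ)) * ((∑ t : ZMod p, ‖lam p (n+2) d' (Ft t)‖)^(K+1) / (p:ℝ)^K)
              := by
              rw [mul_pow]
              field_simp
              ring_nf
              rw [show (p:ℝ) * (p:ℝ)^K * (p:ℝ)⁻¹ * (p:ℝ)⁻¹^K = 1 by field_simp; rw [← mul_pow, mul_one_div_cancel hP0, one_pow], one_mul]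
          _ ≤ (1/(p:ℝ)) * ∑ t : ZMod p, ‖lam p (n+2) d' (Ft t)‖ ^ (K+1) :=
              mul_le_mul_of_nonneg_left h (by positivity)
      have hIH : ∀ t : ZMod p, ‖lam p (n+2) d' (Ft t)‖ ^ (2^(n+1))
          ≤ (gowersUavg p (n+1) (Ft t 0)).re := fun t => ih d' hd'inj (Ft t) (hFtb t)
      have hFt0 : ∀ t : ZMod p, Ft t 0 = mder (t * d' 0) (F 0) := by
        intro t
        funext x
        rw [hFt, mder]
        simp [Fin.castSucc_zero]
      have hre : ∑ t : ZMod p, (gowersUavg p (n+1) (mder (t * d' 0) (F 0))).re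
          = ∑ s : ZMod p, (gowersUavg p (n+1) (mder s (F 0))).re :=
        sum_mul_reindex (d' 0) he (fun s => (gowersUavg p (n+1) (mder s (F 0))).re)
      have hfinal : (gowersUavg p (n+2) (F 0)).re
          = (1/(p:ℝ)) * ∑ s : ZMod p, (gowersUavg p (n+1) (mder s (F 0))).re := by
        have h0 : (gowersUavg p (n+2) (F 0)).re
            = ((1/(p:ℂ)) * ∑ s : ZMod p, gowersUavg p (n+1) (mder s (F 0))).re :=
          congrArg Complex.re (Uavg_succ p (n+1) (F 0))
        rw [h0, show (1/(p:ℂ)) = (((1/(p:ℝ)) : ℝ) : ℂ) by push_cast; ring,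
          Complex.re_ofReal_mul, Complex.re_sum]
      show ‖lam p (n + 3) c F‖ ^ 2^(n+2) ≤ (gowersUavg p (n+2) (F 0)).re
      calc ‖lam p (n + 3) c F‖ ^ 2^(n+2)
          = (‖lam p (n + 3) c F‖ ^ 2)^(2^(n+1)) := by
            rw [show 2^(n+2) = 2 * 2^(n+1) by ring, pow_mul]
        _ ≤ ((1/(p:ℝ)) * ∑ t : ZMod p, ‖lam p (n+2) d' (Ft t)‖)^(2^(n+1)) :=
            pow_le_pow_left₀ (sq_nonneg _) S2 _
        _ ≤ (1/(p:ℝ)) * ∑ t : ZMod p, ‖lam p (n+2) d' (Ft t)‖ ^ (2^(n+1)) := hpm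
        _ ≤ (1/(p:ℝ)) * ∑ t : ZMod p, (gowersUavg p (n+1) (Ft t 0)).re :=
            mul_le_mul_of_nonneg_left (Finset.sum_le_sum fun t _ => hIH t) (by positivity)
        _ = (1/(p:ℝ)) * ∑ s : ZMod p, (gowersUavg p (n+1) (mder s (F 0))).re := by
            rw [Finset.sum_congr rfl fun t _ => by rw [hFt0 t]]
            exact congrArg _ hre
        _ = (gowersUavg p (n+2) (F 0)).re := hfinal.symm


/-- Generalized von Neumann inequality in `ℤ/pℤ`: for `1`-bounded `f₁,...,f_k` and
distinct nonzero `b₂,...,b_k` (with `b₁ = 0`),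
`|E_{m,j} f₁(j) f₂(j+m b₂) ⋯ f_k(j+m b_k)| ≤ ‖f₁‖_{U^{k-1}}`. -/
theorem generalized_von_neumann (p k : ℕ) [Fact p.Prime] (hk : 2 ≤ k)
    (b : Fin k → ZMod p) (hb0 : b ⟨0, by omega⟩ = 0) (hbne : ∀ i, i ≠ ⟨0, by omega⟩ → b i ≠ 0)
    (hbinj : Function.Injective b)
    (f : Fin k → ZMod p → ℂ) (hf : ∀ i x, ‖f i x‖ ≤ 1) :
    ‖(1 / (p : ℂ) ^ 2) *
        ∑ m : ZMod p, ∑ j : ZMod p, ∏ i, f i (j + m * b i)‖ ≤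
      gowersNorm p (k - 1) (f ⟨0, by omega⟩) := by
  obtain ⟨n, rfl⟩ : ∃ n, k = n + 2 := ⟨k - 2, by omega⟩
  have hz : (⟨0, by omega⟩ : Fin (n + 2)) = 0 := by
    ext
    simp
  rw [hz]
  have hkey := key p n b hbinj f hf
  have hlam : ‖(1 / (p : ℂ) ^ 2) *
      ∑ m : ZMod p, ∑ j : ZMod p, ∏ i, f i (j + m * b i)‖
      = ‖lam p (n + 2) b f‖ := rfl
  rw [hlam]
  show ‖lam p (n + 2) b f‖ ≤ (gowersUavg p (n + 1) (f 0)).re ^ ((1 : ℝ) / 2 ^ (n + 1))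
  set X := ‖lam p (n + 2) b f‖ with hX
  set R := (gowersUavg p (n + 1) (f 0)).re with hR
  have hX0 : (0 : ℝ) ≤ X := norm_nonneg _
  have hXn : (0 : ℝ) ≤ X ^ 2 ^ (n + 1) := pow_nonneg hX0 _
  calc X = (X ^ (2 ^ (n + 1) : ℕ)) ^ ((1 : ℝ) / 2 ^ (n + 1)) := by
        rw [← Real.rpow_natCast X (2 ^ (n + 1)), ← Real.rpow_mul hX0]
        push_cast
        rw [mul_one_div, div_self (by positivity : ((2:ℝ))^(n+1) ≠ 0), Real.rpow_one]
    _ ≤ R ^ ((1 : ℝ) / 2 ^ (n + 1)) :=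
        Real.rpow_le_rpow hXn hkey (by positivity)
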